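/- If a, b, c, d are nonnegative integers satisfying P(a,b,c,d) = 0, where P(a,b,c,d) = a^2 + b^2 + c^2 + d^2 - 2ab - 2ac - 2ad - 2bc - 2bd - 2cd - 4abcd - 4, then each of the six pairwise products ab+1, ac+1, ad+1, bc+1, bd+1, cd+1 is a perfect square. -/
import Mathlib

def P (a b c d : ℤ) : ℤ := a^2 + b^2 + c^2 + d^2 - 2*a*b - 2*a*c - 2*a*d - 2*b*c - 2*b*d - 2*c*d - 4*a*b*c*d - 4

private lemma sqcomm {x y : ℤ} (h : IsSquare (x*y+1)) : IsSquare (y*x+1) := by rwa [mul_comm]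

private lemma baseBound (a b c : ℤ) (ha : 0 ≤ a) (hab : a ≤ b) (hbc : b ≤ c)
    (key : a^2+b^2+c^2-2*a*b-2*a*c-2*b*c+2*a+2*b+2*c+4*a*b*c-3 ≤ 0) :
    a = 0 ∧ b = 0 ∧ c ≤ 1 := by
  have hb : 0 ≤ b := le_trans ha hab
  have hc : 0 ≤ c := le_trans hb hbc
  have ha0 : a = 0 := by
    nlinarith [sq_nonneg (c-a-b), sq_nonneg (a-b), mul_nonneg (mul_nonneg ha hb) hc, mul_nonneg hb hc]
  subst ha0
  have hb0 : b = 0 := by nlinarith [sq_nonneg (b-c)]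
  subst hb0
  exact ⟨rfl, rfl, by nlinarith⟩

private lemma sortedKey : ∀ (n : ℕ) (a b c d : ℤ), a+b+c+d ≤ (n:ℤ) → 0 ≤ a → a ≤ b → b ≤ c → c ≤ d → P a b c d = 0 →
    IsSquare (a*b+1) ∧ IsSquare (a*c+1) ∧ IsSquare (a*d+1) ∧
    IsSquare (b*c+1) ∧ IsSquare (b*d+1) ∧ IsSquare (c*d+1) := by
  intro n
  induction n using Nat.strong_induction_on with
  | _ n ih =>
    intro a b c d hn ha hab hbc hcd hP
    have hb : 0 ≤ b := le_trans ha hab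
    have hc : 0 ≤ c := le_trans hb hbc
    have hd : 0 ≤ d := le_trans hc hcd
    have hPe : a^2 + b^2 + c^2 + d^2 - 2*a*b - 2*a*c - 2*a*d - 2*b*c - 2*b*d - 2*c*d - 4*a*b*c*d - 4 = 0 := hP
    obtain ⟨d', hd'def⟩ : ∃ d', d' = 2*(a+b+c)+4*a*b*c - d := ⟨_, rfl⟩
    have hroot : P a b c d' = 0 := by
      unfold P; linear_combination hPe + (d'-d)*hd'def
    by_cases hneg : d' < 0
    · -- base case: forces a = 0, b = 0, c ≤ 1
      have hf : a^2+b^2+c^2-2*a*b-2*a*c-2*b*c+2*a+2*b+2*c+4*a*b*c-3 = (1+d)*(1+d') := by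
        linear_combination hPe - (1+d)*hd'def
      have hf2 : (1+d)*(1+d') ≤ 0 :=
        mul_nonpos_of_nonneg_of_nonpos (by linarith) (by linarith)
      have key : a^2+b^2+c^2-2*a*b-2*a*c-2*b*c+2*a+2*b+2*c+4*a*b*c-3 ≤ 0 := by
        rw [hf]; exact hf2
      obtain ⟨ha0, hb0, hc1⟩ := baseBound a b c ha hab hbc key
      subst ha0; subst hb0
      interval_cases c
      · have h2 : (d-2)*(d+2) = 0 := by linear_combination hPe
        rcases mul_eq_zero.1 h2 with h3 | h3
        · have hdv : d = 2 := by linarith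
          subst hdv
          exact ⟨⟨1, by ring⟩, ⟨1, by ring⟩, ⟨1, by ring⟩, ⟨1, by ring⟩, ⟨1, by ring⟩, ⟨1, by ring⟩⟩
        · exfalso; omega
      · have h2 : (d-3)*(d+1) = 0 := by linear_combination hPe
        rcases mul_eq_zero.1 h2 with h3 | h3
        · have hdv : d = 3 := by linarith
          subst hdv
          exact ⟨⟨1, by ring⟩, ⟨1, by ring⟩, ⟨1, by ring⟩, ⟨1, by ring⟩, ⟨1, by ring⟩, ⟨2, by ring⟩⟩
        · exfalso; omega
    · push_neg at hneg
      have hd1 : 1 ≤ d := by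
        by_contra hcon
        push_neg at hcon
        have hda : d = 0 := le_antisymm (by omega) hd
        subst hda
        have ha' : a = 0 := le_antisymm (by linarith) ha
        have hb' : b = 0 := le_antisymm (by linarith) hb
        have hc' : c = 0 := le_antisymm (by linarith) hc
        subst ha'; subst hb'; subst hc'
        norm_num at hPe
      have hprod : d * d' = a^2+b^2+c^2-2*a*b-2*a*c-2*b*c-4 := by
        linear_combination -hPe + d*hd'def
      have hlt : d' < d := by
        nlinarith [hprod, mul_nonneg (add_nonneg ha hb) (show (0:ℤ) ≤ 2*c-a-b by linarith),
          mul_le_mul_of_nonneg_left hcd hd]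
      have hn1 : 1 ≤ n := by
        have h1 : (1:ℤ) ≤ (n:ℤ) := le_trans (by linarith) hn
        exact_mod_cast h1
      have hcast : ((n-1:ℕ):ℤ) = (n:ℤ) - 1 := by
        push_cast [Nat.cast_sub hn1]; ring
      have hsum : a+b+c+d' ≤ ((n-1:ℕ):ℤ) := by rw [hcast]; linarith
      have hnm : n - 1 < n := by omega
      have htriple : IsSquare (a*b+1) ∧ IsSquare (a*c+1) ∧ IsSquare (b*c+1) := by
        rcases le_total c d' with h1 | h1
        · obtain ⟨q1, q2, _, q4, _, _⟩ := ih (n-1) hnm a b c d' hsum ha hab hbc h1 hroot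
          exact ⟨q1, q2, q4⟩
        · rcases le_total b d' with h2 | h2
          · have hP2 : P a b d' c = 0 := by
              rw [show P a b d' c = P a b c d' from by unfold P; ring]; exact hroot
            obtain ⟨q1, _, q3, _, q5, _⟩ := ih (n-1) hnm a b d' c (by linarith) ha hab h2 h1 hP2
            exact ⟨q1, q3, q5⟩
          · rcases le_total a d' with h3 | h3
            · have hP2 : P a d' b c = 0 := by
                rw [show P a d' b c = P a b c d' from by unfold P; ring]; exact hroot
              obtain ⟨_, q2, q3, _, _, q6⟩ := ih (n-1) hnm a d' b c (by linarith) ha h3 h2 hbc hP2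
              exact ⟨q2, q3, q6⟩
            · have hP2 : P d' a b c = 0 := by
                rw [show P d' a b c = P a b c d' from by unfold P; ring]; exact hroot
              obtain ⟨_, _, _, q4, q5, q6⟩ := ih (n-1) hnm d' a b c (by linarith) hneg h3 hab hbc hP2
              exact ⟨q4, q5, q6⟩
      obtain ⟨⟨r, hr⟩, ⟨s, hs⟩, ⟨t, ht⟩⟩ := htriple
      have hsq : (d - (a+b+c+2*a*b*c) - 2*r*s*t) * (d - (a+b+c+2*a*b*c) + 2*r*s*t) = 0 := by
        linear_combination hPe + 4*(a*c+1)*(b*c+1)*hr + 4*(r*r)*(b*c+1)*hs + 4*(r*r)*(s*s)*ht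
      rcases mul_eq_zero.1 hsq with h0 | h0
      · have hd_eq : d = a+b+c+2*a*b*c + 2*r*s*t := by linarith
        subst hd_eq
        refine ⟨⟨r, hr⟩, ⟨s, hs⟩, ⟨r*s+a*t, ?_⟩, ⟨t, ht⟩, ⟨r*t+b*s, ?_⟩, ⟨s*t+c*r, ?_⟩⟩
        · linear_combination (a*c+1)*hr + (r*r)*hs + a^2*ht
        · linear_combination (b*c+1)*hr + b^2*hs + (r*r)*ht
        · linear_combination c^2*hr + (b*c+1)*hs + (s*s)*ht
      · have hd_eq : d = a+b+c+2*a*b*c - 2*r*s*t := by linarith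
        subst hd_eq
        refine ⟨⟨r, hr⟩, ⟨s, hs⟩, ⟨r*s-a*t, ?_⟩, ⟨t, ht⟩, ⟨r*t-b*s, ?_⟩, ⟨s*t-c*r, ?_⟩⟩
        · linear_combination (a*c+1)*hr + (r*r)*hs + a^2*ht
        · linear_combination (b*c+1)*hr + b^2*hs + (r*r)*ht
        · linear_combination c^2*hr + (b*c+1)*hs + (s*s)*ht

private lemma key3 (a b c d : ℤ) (ha : 0 ≤ a) (hab : a ≤ b) (hbc : b ≤ c) (hd : 0 ≤ d)
    (hP : P a b c d = 0) :
    IsSquare (a*b+1) ∧ IsSquare (a*c+1) ∧ IsSquare (a*d+1) ∧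
    IsSquare (b*c+1) ∧ IsSquare (b*d+1) ∧ IsSquare (c*d+1) := by
  have hb : 0 ≤ b := le_trans ha hab
  have hc : 0 ≤ c := le_trans hb hbc
  rcases le_total c d with h1 | h1
  · exact sortedKey (a+b+c+d).toNat a b c d (Int.self_le_toNat _) ha hab hbc h1 hP
  · rcases le_total b d with h2 | h2
    · have hP2 : P a b d c = 0 := by
        rw [show P a b d c = P a b c d from by unfold P; ring]; exact hP
      obtain ⟨q1, q2, q3, q4, q5, q6⟩ :=
        sortedKey (a+b+d+c).toNat a b d c (Int.self_le_toNat _) ha hab h2 h1 hP2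
      exact ⟨q1, q3, q2, q5, q4, sqcomm q6⟩
    · rcases le_total a d with h3 | h3
      · have hP2 : P a d b c = 0 := by
          rw [show P a d b c = P a b c d from by unfold P; ring]; exact hP
        obtain ⟨q1, q2, q3, q4, q5, q6⟩ :=
          sortedKey (a+d+b+c).toNat a d b c (Int.self_le_toNat _) ha h3 h2 hbc hP2
        exact ⟨q2, q3, q1, q6, sqcomm q4, sqcomm q5⟩
      · have hP2 : P d a b c = 0 := by
          rw [show P d a b c = P a b c d from by unfold P; ring]; exact hP
        obtain ⟨q1, q2, q3, q4, q5, q6⟩ :=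
          sortedKey (d+a+b+c).toNat d a b c (Int.self_le_toNat _) hd h3 hab hbc hP2
        exact ⟨q4, q5, sqcomm q1, q6, sqcomm q2, sqcomm q3⟩

private lemma key2 (a b c d : ℤ) (ha : 0 ≤ a) (hab : a ≤ b) (hc : 0 ≤ c) (hd : 0 ≤ d)
    (hP : P a b c d = 0) :
    IsSquare (a*b+1) ∧ IsSquare (a*c+1) ∧ IsSquare (a*d+1) ∧
    IsSquare (b*c+1) ∧ IsSquare (b*d+1) ∧ IsSquare (c*d+1) := by
  rcases le_total b c with h1 | h1
  · exact key3 a b c d ha hab h1 hd hP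
  · rcases le_total a c with h2 | h2
    · have hP2 : P a c b d = 0 := by
        rw [show P a c b d = P a b c d from by unfold P; ring]; exact hP
      obtain ⟨q1, q2, q3, q4, q5, q6⟩ := key3 a c b d ha h2 h1 hd hP2
      exact ⟨q2, q1, q3, sqcomm q4, q6, q5⟩
    · have hP2 : P c a b d = 0 := by
        rw [show P c a b d = P a b c d from by unfold P; ring]; exact hP
      obtain ⟨q1, q2, q3, q4, q5, q6⟩ := key3 c a b d hc h2 hab hd hP2
      exact ⟨q4, sqcomm q1, q5, sqcomm q2, q6, q3⟩

theorem stmt_7 (a b c d : ℤ) (ha : 0 ≤ a) (hb : 0 ≤ b) (hc : 0 ≤ c) (hd : 0 ≤ d)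
    (h : P a b c d = 0) :
    IsSquare (a*b+1) ∧ IsSquare (a*c+1) ∧ IsSquare (a*d+1) ∧
    IsSquare (b*c+1) ∧ IsSquare (b*d+1) ∧ IsSquare (c*d+1) := by
  rcases le_total a b with h1 | h1
  · exact key2 a b c d ha h1 hc hd h
  · have hP2 : P b a c d = 0 := by
      rw [show P b a c d = P a b c d from by unfold P; ring]; exact h
    obtain ⟨q1, q2, q3, q4, q5, q6⟩ := key2 b a c d hb h1 hc hd hP2
    exact ⟨sqcomm q1, q4, q5, q2, q3, q6⟩
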